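/- The first-price acquisition price map p⋆(v) is strictly increasing on [0,r], with p⋆(0) = π₀ and p⋆(r) = r. Consequently, for every p ∈ (π₀, r] there is a unique cutoff v⋆ ∈ (0,r] with p⋆(v⋆) = p. -/

import Mathlib

open MeasureTheory Set

/-- Truncated conditional CDF `G(x; v) = (F x − F v)/(1 − F v)`. -/
noncomputable def G (F : ℝ → ℝ) (v x : ℝ) : ℝ := (F x - F v) / (1 - F v)

/-- `ubar_b(m, v) = max_{b ∈ [v, r]} b (1 − G(b; v))^m`. -/
noncomputable def ubarb (F : ℝ → ℝ) (r : ℝ) (m : ℕ) (v : ℝ) : ℝ :=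
  sSup ((fun b => b * (1 - G F v b) ^ m) '' Icc v r)

/-- `π₀ = ∫_0^r (1−F x)^(N−1) dx`. -/
noncomputable def pi0 (F : ℝ → ℝ) (N : ℕ) (r : ℝ) : ℝ :=
  ∫ x in (0 : ℝ)..r, (1 - F x) ^ (N - 1)

/-- First-price acquisition price `p⋆(v)`. -/
noncomputable def pFPA (F : ℝ → ℝ) (N : ℕ) (r : ℝ) (v : ℝ) : ℝ :=
  v + (∫ x in v..r, (1 - F x) ^ (N - 1)) +
    ∑ m ∈ Finset.range (N - 1),
      ((N - 1).choose m : ℝ) * (1 - F v) ^ m * (F v) ^ (N - 1 - m) *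
        (ubarb F r (m + 1) v - v)

/-! ### Auxiliary definitions and lemmas -/

/-- `phiM F r m v = max_{b ∈ [v,r]} b (1 - F b)^m`. -/
noncomputable def phiM (F : ℝ → ℝ) (r : ℝ) (m : ℕ) (v : ℝ) : ℝ :=
  sSup ((fun b => b * (1 - F b) ^ m) '' Icc v r)

lemma phiM_isGreatest (F : ℝ → ℝ) {r : ℝ} (m : ℕ) {v : ℝ}
    (hFc : ContinuousOn F (Icc 0 1)) (hv0 : 0 ≤ v) (hvr : v ≤ r) (hr1 : r ≤ 1) :
    IsGreatest ((fun b => b * (1 - F b) ^ m) '' Icc v r) (phiM F r m v) := by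
  have hsub : Icc v r ⊆ Icc (0:ℝ) 1 := Icc_subset_Icc hv0 hr1
  have hc : ContinuousOn (fun b => b * (1 - F b) ^ m) (Icc v r) :=
    continuousOn_id.mul ((continuousOn_const.sub (hFc.mono hsub)).pow m)
  obtain ⟨b0, hb0, hmax⟩ :=
    isCompact_Icc.exists_isMaxOn (nonempty_Icc.2 hvr) hc
  have hG : IsGreatest ((fun b => b * (1 - F b) ^ m) '' Icc v r) (b0 * (1 - F b0) ^ m) := by
    constructor
    · exact ⟨b0, hb0, rfl⟩
    · rintro _ ⟨b, hb, rfl⟩; exact hmax hb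
  have : phiM F r m v = b0 * (1 - F b0) ^ m := hG.csSup_eq
  rw [this]; exact hG

lemma phiM_ge (F : ℝ → ℝ) {r : ℝ} (m : ℕ) {v : ℝ}
    (hFc : ContinuousOn F (Icc 0 1)) (hv0 : 0 ≤ v) (hvr : v ≤ r) (hr1 : r ≤ 1) :
    v * (1 - F v) ^ m ≤ phiM F r m v :=
  (phiM_isGreatest F m hFc hv0 hvr hr1).2 ⟨v, left_mem_Icc.2 hvr, rfl⟩

lemma phiM_le (F : ℝ → ℝ) {r : ℝ} (m : ℕ) {v : ℝ}
    (hFc : ContinuousOn F (Icc 0 1)) (hFm : MonotoneOn F (Icc 0 1)) (hF1 : F 1 = 1)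
    (hv0 : 0 ≤ v) (hvr : v ≤ r) (hr1 : r ≤ 1) :
    phiM F r m v ≤ r * (1 - F v) ^ m := by
  have hsub : Icc v r ⊆ Icc (0:ℝ) 1 := Icc_subset_Icc hv0 hr1
  obtain ⟨⟨b0, hb0, he⟩, _⟩ := phiM_isGreatest F m hFc hv0 hvr hr1
  rw [← he]
  have hb01 : b0 ∈ Icc (0:ℝ) 1 := hsub hb0
  have h1 : F b0 ≤ 1 := by
    have := hFm hb01 (right_mem_Icc.2 zero_le_one) hb01.2
    rwa [hF1] at this
  have h2 : F v ≤ F b0 := hFm (hsub (left_mem_Icc.2 hvr)) hb01 hb0.1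
  have h3 : (1 - F b0) ^ m ≤ (1 - F v) ^ m :=
    pow_le_pow_left₀ (by linarith) (by linarith) m
  exact mul_le_mul hb0.2 h3 (pow_nonneg (by linarith) m) (hv0.trans hvr)

lemma phiM_compare (F : ℝ → ℝ) {r : ℝ} (m : ℕ) {v1 v2 : ℝ}
    (hFc : ContinuousOn F (Icc 0 1)) (hFm : MonotoneOn F (Icc 0 1)) (hF1 : F 1 = 1)
    (h10 : 0 ≤ v1) (h12 : v1 ≤ v2) (h2r : v2 ≤ r) (hr1 : r ≤ 1) :
    phiM F r m v1 ≤ max (v2 * (1 - F v1) ^ m) (phiM F r m v2) := by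
  have h1r : v1 ≤ r := h12.trans h2r
  have hsub : Icc v1 r ⊆ Icc (0:ℝ) 1 := Icc_subset_Icc h10 hr1
  obtain ⟨⟨b0, hb0, he⟩, _⟩ := phiM_isGreatest F m hFc h10 h1r hr1
  rw [← he]
  rcases le_total b0 v2 with h | h
  · refine le_max_of_le_left ?_
    have hb01 : b0 ∈ Icc (0:ℝ) 1 := hsub hb0
    have hFb1 : F b0 ≤ 1 := by
      have := hFm hb01 (right_mem_Icc.2 zero_le_one) hb01.2
      rwa [hF1] at this
    have h2 : F v1 ≤ F b0 := hFm (hsub (left_mem_Icc.2 h1r)) hb01 hb0.1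
    have h3 : (1 - F b0) ^ m ≤ (1 - F v1) ^ m :=
      pow_le_pow_left₀ (by linarith) (by linarith) m
    exact mul_le_mul h h3 (pow_nonneg (by linarith) m) (h10.trans h12)
  · exact le_max_of_le_right
      ((phiM_isGreatest F m hFc (h10.trans h12) h2r hr1).2 ⟨b0, ⟨h, hb0.2⟩, rfl⟩)

lemma ubarb_eq_phiM (F : ℝ → ℝ) {r : ℝ} (m : ℕ) {v : ℝ}
    (hFc : ContinuousOn F (Icc 0 1)) (hv0 : 0 ≤ v) (hvr : v ≤ r) (hr1 : r ≤ 1)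
    (hFv : F v < 1) :
    ubarb F r m v = phiM F r m v / (1 - F v) ^ m := by
  have hd : (0:ℝ) < 1 - F v := by linarith
  have hdm : (0:ℝ) < (1 - F v) ^ m := pow_pos hd m
  have hkey : ∀ b : ℝ, b * (1 - G F v b) ^ m = b * (1 - F b) ^ m / (1 - F v) ^ m := by
    intro b
    have h1 : 1 - G F v b = (1 - F b) / (1 - F v) := by
      rw [G]; field_simp; ring
    rw [h1, div_pow, mul_div_assoc]
  have hG := phiM_isGreatest F m hFc hv0 hvr hr1
  have hG' : IsGreatest ((fun b => b * (1 - G F v b) ^ m) '' Icc v r)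
      (phiM F r m v / (1 - F v) ^ m) := by
    constructor
    · obtain ⟨b0, hb0, he⟩ := hG.1
      refine ⟨b0, hb0, ?_⟩
      show b0 * (1 - G F v b0) ^ m = _
      have he' : b0 * (1 - F b0) ^ m = phiM F r m v := he
      rw [hkey b0, he']
    · rintro _ ⟨b, hb, rfl⟩
      simp only
      rw [hkey b]
      have := hG.2 ⟨b, hb, rfl⟩
      exact div_le_div_of_nonneg_right this hdm.le
  exact hG'.csSup_eq

lemma le_ubarb (F : ℝ → ℝ) {r : ℝ} (m : ℕ) {v : ℝ}
    (hFc : ContinuousOn F (Icc 0 1)) (hv0 : 0 ≤ v) (hvr : v ≤ r) (hr1 : r ≤ 1) :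
    v ≤ ubarb F r m v := by
  have hsub : Icc v r ⊆ Icc (0:ℝ) 1 := Icc_subset_Icc hv0 hr1
  have hc : ContinuousOn (fun b => b * (1 - G F v b) ^ m) (Icc v r) := by
    apply continuousOn_id.mul
    apply (continuousOn_const.sub _).pow
    exact ((hFc.mono hsub).sub continuousOn_const).div_const _
  have hbdd : BddAbove ((fun b => b * (1 - G F v b) ^ m) '' Icc v r) :=
    (isCompact_Icc.image_of_continuousOn hc).bddAbove
  have hmem : v * (1 - G F v v) ^ m ∈ (fun b => b * (1 - G F v b) ^ m) '' Icc v r :=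
    mem_image_of_mem _ (left_mem_Icc.2 hvr)
  have hval : v * (1 - G F v v) ^ m = v := by
    rw [G, sub_self, zero_div, sub_zero, one_pow, mul_one]
  calc v = v * (1 - G F v v) ^ m := hval.symm
    _ ≤ sSup _ := le_csSup hbdd hmem

lemma binom_sum (n : ℕ) (q : ℝ) :
    ∑ m ∈ Finset.range n, ((n.choose m : ℝ) * (1 - q) ^ m * q ^ (n - m))
      = 1 - (1 - q) ^ n := by
  have h := add_pow (1 - q) q n
  rw [show (1:ℝ) - q + q = 1 by ring, one_pow, Finset.sum_range_succ] at h
  simp only [Nat.sub_self, pow_zero, Nat.choose_self, Nat.cast_one, mul_one, one_mul] at h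
  have h2 : ∑ m ∈ Finset.range n, ((n.choose m : ℝ) * (1 - q) ^ m * q ^ (n - m))
      = ∑ m ∈ Finset.range n, ((1 - q) ^ m * q ^ (n - m) * (n.choose m : ℝ)) :=
    Finset.sum_congr rfl (fun m _ => by ring)
  rw [h2]; linarith

lemma key_ineq (m k : ℕ) (c q1 q2 v2 φ1 φ2 : ℝ) (hc : 0 ≤ c)
    (h0 : 0 ≤ q1) (h12 : q1 ≤ q2) (h2 : q2 < 1) (hv2 : 0 ≤ v2)
    (hφ1 : φ1 ≤ max (v2 * (1 - q1) ^ (m + 1)) φ2)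
    (hφ2 : v2 * (1 - q2) ^ (m + 1) ≤ φ2) :
    c * q1 ^ k * φ1 / (1 - q1) + c * v2 * (q2 ^ k * (1 - q2) ^ m)
      ≤ c * q2 ^ k * φ2 / (1 - q2) + c * v2 * (q1 ^ k * (1 - q1) ^ m) := by
  have h1 : (0:ℝ) < 1 - q1 := by linarith
  have h2' : (0:ℝ) < 1 - q2 := by linarith
  have hq2 : (0:ℝ) ≤ q2 := h0.trans h12
  have hP : (0:ℝ) < (1 - q1) * (1 - q2) := mul_pos h1 h2'
  rw [← sub_nonneg]
  have expand : (c * q2 ^ k * φ2 / (1 - q2) + c * v2 * (q1 ^ k * (1 - q1) ^ m)) -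
      (c * q1 ^ k * φ1 / (1 - q1) + c * v2 * (q2 ^ k * (1 - q2) ^ m))
      = (c * q2 ^ k * φ2 * (1 - q1) + c * v2 * q1 ^ k * (1 - q1) ^ (m + 1) * (1 - q2)
         - c * q1 ^ k * φ1 * (1 - q2) - c * v2 * q2 ^ k * (1 - q2) ^ (m + 1) * (1 - q1))
        / ((1 - q1) * (1 - q2)) := by
    field_simp
    ring
  rw [expand]
  apply div_nonneg _ hP.le
  have hq1k : (0:ℝ) ≤ q1 ^ k := pow_nonneg h0 k
  have hq2k : (0:ℝ) ≤ q2 ^ k := pow_nonneg hq2 k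
  have hk12 : q1 ^ k ≤ q2 ^ k := pow_le_pow_left₀ h0 h12 k
  have hpow : (1 - q2) ^ (m + 1) ≤ (1 - q1) ^ (m + 1) :=
    pow_le_pow_left₀ h2'.le (by linarith) _
  have hφ2nn : (0:ℝ) ≤ φ2 :=
    le_trans (mul_nonneg hv2 (pow_nonneg h2'.le _)) hφ2
  rcases le_total φ2 (v2 * (1 - q1) ^ (m + 1)) with hcase | hcase
  · have hφ1' : φ1 ≤ v2 * (1 - q1) ^ (m + 1) := hφ1.trans_eq (max_eq_left hcase)
    have da : 0 ≤ c * q2 ^ k * (1 - q1) * (φ2 - v2 * (1 - q2) ^ (m + 1)) :=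
      mul_nonneg (mul_nonneg (mul_nonneg hc hq2k) h1.le) (by linarith)
    have db : 0 ≤ c * q1 ^ k * (1 - q2) * (v2 * (1 - q1) ^ (m + 1) - φ1) :=
      mul_nonneg (mul_nonneg (mul_nonneg hc hq1k) h2'.le) (by linarith)
    nlinarith [da, db]
  · have hφ1' : φ1 ≤ φ2 := hφ1.trans_eq (max_eq_right hcase)
    have d1 : 0 ≤ c * (1 - q2) * q1 ^ k * (φ2 - φ1) :=
      mul_nonneg (mul_nonneg (mul_nonneg hc h2'.le) hq1k) (by linarith)
    have hfac : (0:ℝ) ≤ q2 ^ k * (1 - q1) - q1 ^ k * (1 - q2) := by nlinarith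
    have d2 : 0 ≤ c * (q2 ^ k * (1 - q1) - q1 ^ k * (1 - q2)) *
        (φ2 - v2 * (1 - q2) ^ (m + 1)) :=
      mul_nonneg (mul_nonneg hc hfac) (by linarith)
    have d3 : 0 ≤ c * v2 * q1 ^ k * (1 - q2) * ((1 - q1) ^ (m + 1) - (1 - q2) ^ (m + 1)) :=
      mul_nonneg (mul_nonneg (mul_nonneg (mul_nonneg hc hv2) hq1k) h2'.le) (by linarith)
    nlinarith [d1, d2, d3]

lemma pFPA_eq (F : ℝ → ℝ) (N : ℕ) {r v : ℝ}
    (hFc : ContinuousOn F (Icc 0 1))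
    (hv0 : 0 ≤ v) (hvr : v ≤ r) (hr1 : r ≤ 1) (hFv : F v < 1) :
    pFPA F N r v = v * (1 - F v) ^ (N - 1) + (∫ x in v..r, (1 - F x) ^ (N - 1)) +
      ∑ m ∈ Finset.range (N - 1),
        ((N - 1).choose m : ℝ) * (F v) ^ (N - 1 - m) * phiM F r (m + 1) v / (1 - F v) := by
  have hd : (0:ℝ) < 1 - F v := by linarith
  rw [pFPA]
  have hterm : ∀ m ∈ Finset.range (N - 1),
      ((N - 1).choose m : ℝ) * (1 - F v) ^ m * (F v) ^ (N - 1 - m) * (ubarb F r (m + 1) v - v)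
      = ((N - 1).choose m : ℝ) * (F v) ^ (N - 1 - m) * phiM F r (m + 1) v / (1 - F v)
        - ((N - 1).choose m : ℝ) * (1 - F v) ^ m * (F v) ^ (N - 1 - m) * v := by
    intro m _
    rw [ubarb_eq_phiM F (m + 1) hFc hv0 hvr hr1 hFv]
    field_simp
    ring
  rw [Finset.sum_congr rfl hterm, Finset.sum_sub_distrib]
  have hv : ∑ m ∈ Finset.range (N - 1),
      ((N - 1).choose m : ℝ) * (1 - F v) ^ m * (F v) ^ (N - 1 - m) * v
      = (1 - (1 - F v) ^ (N - 1)) * v := by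
    rw [← Finset.sum_mul, binom_sum]
  rw [hv]; ring

lemma pFPA_at_r (F : ℝ → ℝ) (N : ℕ) (r : ℝ) : pFPA F N r r = r := by
  rw [pFPA, intervalIntegral.integral_same]
  have h : ∀ m ∈ Finset.range (N - 1),
      ((N - 1).choose m : ℝ) * (1 - F r) ^ m * (F r) ^ (N - 1 - m) *
        (ubarb F r (m + 1) r - r) = 0 := by
    intro m _
    have hu : ubarb F r (m + 1) r = r := by
      rw [ubarb, Icc_self, image_singleton, csSup_singleton, G, sub_self, zero_div,
        sub_zero, one_pow, mul_one]
    rw [hu, sub_self, mul_zero]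
  rw [Finset.sum_eq_zero h]; ring

lemma pFPA_at_zero (F : ℝ → ℝ) (N : ℕ) (r : ℝ) (hF0 : F 0 = 0) :
    pFPA F N r 0 = pi0 F N r := by
  rw [pFPA, pi0]
  have h : ∀ m ∈ Finset.range (N - 1),
      ((N - 1).choose m : ℝ) * (1 - F 0) ^ m * (F 0) ^ (N - 1 - m) *
        (ubarb F r (m + 1) 0 - 0) = 0 := by
    intro m hm
    have : N - 1 - m ≠ 0 := by
      have := Finset.mem_range.1 hm; omega
    rw [hF0, zero_pow this]; ring
  rw [Finset.sum_eq_zero h]; ring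

lemma le_pFPA (F : ℝ → ℝ) (N : ℕ) {r v : ℝ}
    (hFc : ContinuousOn F (Icc 0 1)) (hFm : MonotoneOn F (Icc 0 1))
    (hF0 : F 0 = 0) (hF1 : F 1 = 1)
    (hv0 : 0 ≤ v) (hvr : v ≤ r) (hr1 : r ≤ 1) :
    v ≤ pFPA F N r v := by
  have hsub : Icc v r ⊆ Icc (0:ℝ) 1 := Icc_subset_Icc hv0 hr1
  have hv01 : v ∈ Icc (0:ℝ) 1 := ⟨hv0, hvr.trans hr1⟩
  have hI : 0 ≤ ∫ x in v..r, (1 - F x) ^ (N - 1) := by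
    apply intervalIntegral.integral_nonneg hvr
    intro x hx
    have hx1 : F x ≤ 1 := by
      have := hFm (hsub hx) (right_mem_Icc.2 zero_le_one) (hsub hx).2
      rwa [hF1] at this
    exact pow_nonneg (by linarith) _
  have hFv0 : 0 ≤ F v := by
    have := hFm (left_mem_Icc.2 zero_le_one) hv01 hv0
    rwa [hF0] at this
  have hFv1 : F v ≤ 1 := by
    have := hFm hv01 (right_mem_Icc.2 zero_le_one) hv01.2
    rwa [hF1] at this
  have hS : 0 ≤ ∑ m ∈ Finset.range (N - 1),
      ((N - 1).choose m : ℝ) * (1 - F v) ^ m * (F v) ^ (N - 1 - m) *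
        (ubarb F r (m + 1) v - v) := by
    apply Finset.sum_nonneg
    intro m _
    apply mul_nonneg
    · apply mul_nonneg (mul_nonneg (Nat.cast_nonneg _) (pow_nonneg (by linarith) _))
        (pow_nonneg hFv0 _)
    · have := le_ubarb F (m + 1) hFc hv0 hvr hr1
      linarith
  rw [pFPA]; linarith

lemma pFPA_lt_r (F : ℝ → ℝ) (N : ℕ) (hN : 2 ≤ N) {r v : ℝ}
    (hFc : ContinuousOn F (Icc 0 1)) (hFs : StrictMonoOn F (Icc 0 1))
    (hF0 : F 0 = 0) (hF1 : F 1 = 1)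
    (hv0 : 0 ≤ v) (hvr : v < r) (hr1 : r ≤ 1) :
    pFPA F N r v < r := by
  have hFm := hFs.monotoneOn
  have hv01 : v ∈ Icc (0:ℝ) 1 := ⟨hv0, hvr.le.trans hr1⟩
  have hr01 : r ∈ Icc (0:ℝ) 1 := ⟨hv0.trans hvr.le, hr1⟩
  have hFv1 : F v < 1 := by
    have h1 : F v < F r := hFs hv01 hr01 hvr
    have h2 : F r ≤ 1 := by
      have := hFm hr01 (right_mem_Icc.2 zero_le_one) hr1
      rwa [hF1] at this
    linarith
  have hFv0 : 0 ≤ F v := by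
    have := hFm (left_mem_Icc.2 zero_le_one) hv01 hv0
    rwa [hF0] at this
  have hd : (0:ℝ) < 1 - F v := by linarith
  rw [pFPA_eq F N hFc hv0 hvr.le hr1 hFv1]
  set n := N - 1 with hn
  have hn0 : n ≠ 0 := by omega
  -- integral bound
  have hIlt : (∫ x in v..r, (1 - F x) ^ n) < (r - v) * (1 - F v) ^ n := by
    have h := intervalIntegral.integral_lt_integral_of_continuousOn_of_le_of_exists_lt
      (f := fun x => (1 - F x) ^ n) (g := fun _ => (1 - F v) ^ n) hvr
      (((continuousOn_const.sub (hFc.mono (Icc_subset_Icc hv0 hr1))).pow n))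
      continuousOn_const ?hle ?hlt
    · rwa [intervalIntegral.integral_const, smul_eq_mul] at h
    case hle =>
      intro x hx
      have hx01 : x ∈ Icc (0:ℝ) 1 := ⟨hv0.trans hx.1.le, hx.2.trans hr1⟩
      have h1 : F v ≤ F x := hFm hv01 hx01 hx.1.le
      have h2 : F x ≤ 1 := by
        have := hFm hx01 (right_mem_Icc.2 zero_le_one) hx01.2
        rwa [hF1] at this
      exact pow_le_pow_left₀ (by linarith) (by linarith) n
    case hlt =>
      refine ⟨r, right_mem_Icc.2 hvr.le, ?_⟩
      have h1 : F v < F r := hFs hv01 hr01 hvr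
      have h2 : F r ≤ 1 := by
        have := hFm hr01 (right_mem_Icc.2 zero_le_one) hr1
        rwa [hF1] at this
      exact pow_lt_pow_left₀ (by linarith) (by linarith) hn0
  -- sum bound
  have hSle : ∑ m ∈ Finset.range n,
      (n.choose m : ℝ) * (F v) ^ (n - m) * phiM F r (m + 1) v / (1 - F v)
      ≤ (1 - (1 - F v) ^ n) * r := by
    have hper : ∀ m ∈ Finset.range n,
        (n.choose m : ℝ) * (F v) ^ (n - m) * phiM F r (m + 1) v / (1 - F v)
        ≤ (n.choose m : ℝ) * (1 - F v) ^ m * (F v) ^ (n - m) * r := by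
      intro m _
      have hphile := phiM_le F (m + 1) hFc hFm hF1 hv0 hvr.le hr1
      have hc0 : (0:ℝ) ≤ (n.choose m : ℝ) * (F v) ^ (n - m) :=
        mul_nonneg (Nat.cast_nonneg _) (pow_nonneg hFv0 _)
      calc (n.choose m : ℝ) * (F v) ^ (n - m) * phiM F r (m + 1) v / (1 - F v)
          ≤ (n.choose m : ℝ) * (F v) ^ (n - m) * (r * (1 - F v) ^ (m + 1)) / (1 - F v) := by
            apply div_le_div_of_nonneg_right _ hd.le
            exact mul_le_mul_of_nonneg_left hphile hc0
        _ = (n.choose m : ℝ) * (1 - F v) ^ m * (F v) ^ (n - m) * r := by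
            field_simp; ring
    calc ∑ m ∈ Finset.range n,
        (n.choose m : ℝ) * (F v) ^ (n - m) * phiM F r (m + 1) v / (1 - F v)
        ≤ ∑ m ∈ Finset.range n, (n.choose m : ℝ) * (1 - F v) ^ m * (F v) ^ (n - m) * r :=
          Finset.sum_le_sum hper
      _ = (1 - (1 - F v) ^ n) * r := by rw [← Finset.sum_mul, binom_sum]
  nlinarith [hIlt, hSle]

lemma pFPA_lt (F : ℝ → ℝ) (N : ℕ) (hN : 2 ≤ N) {r v1 v2 : ℝ}
    (hFc : ContinuousOn F (Icc 0 1)) (hFs : StrictMonoOn F (Icc 0 1))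
    (hF0 : F 0 = 0) (hF1 : F 1 = 1)
    (h10 : 0 ≤ v1) (h12 : v1 < v2) (h2r : v2 < r) (hr1 : r ≤ 1) :
    pFPA F N r v1 < pFPA F N r v2 := by
  have hFm := hFs.monotoneOn
  have hv101 : v1 ∈ Icc (0:ℝ) 1 := ⟨h10, by linarith⟩
  have hv201 : v2 ∈ Icc (0:ℝ) 1 := ⟨by linarith, by linarith⟩
  have hone : (1:ℝ) ∈ Icc (0:ℝ) 1 := right_mem_Icc.2 zero_le_one
  have hq10 : 0 ≤ F v1 := by
    have := hFm (left_mem_Icc.2 zero_le_one) hv101 h10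
    rwa [hF0] at this
  have hq12 : F v1 ≤ F v2 := hFm hv101 hv201 h12.le
  have hq21 : F v2 < 1 := by
    have := hFs hv201 hone (by linarith : v2 < 1)
    rwa [hF1] at this
  have hq11 : F v1 < 1 := lt_of_le_of_lt hq12 hq21
  set n := N - 1 with hn
  have hn0 : n ≠ 0 := by omega
  have hd1 : (0:ℝ) < 1 - F v1 := by linarith
  have hd2 : (0:ℝ) < 1 - F v2 := by linarith
  have E1 := pFPA_eq F N hFc h10 (by linarith : v1 ≤ r) hr1 hq11
  have E2 := pFPA_eq F N hFc (by linarith : (0:ℝ) ≤ v2) h2r.le hr1 hq21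
  -- per-term inequality and sum
  have hper : ∀ m ∈ Finset.range n,
      (n.choose m : ℝ) * (F v1) ^ (n - m) * phiM F r (m + 1) v1 / (1 - F v1)
        + (n.choose m : ℝ) * v2 * ((F v2) ^ (n - m) * (1 - F v2) ^ m)
      ≤ (n.choose m : ℝ) * (F v2) ^ (n - m) * phiM F r (m + 1) v2 / (1 - F v2)
        + (n.choose m : ℝ) * v2 * ((F v1) ^ (n - m) * (1 - F v1) ^ m) := by
    intro m _
    apply key_ineq m (n - m) _ _ _ _ _ _ (Nat.cast_nonneg _) hq10 hq12 hq21 (by linarith)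
    · exact phiM_compare F (m + 1) hFc hFm hF1 h10 h12.le h2r.le hr1
    · exact phiM_ge F (m + 1) hFc (by linarith) h2r.le hr1
  have hsum := Finset.sum_le_sum hper
  rw [Finset.sum_add_distrib, Finset.sum_add_distrib] at hsum
  have hS : ∀ q : ℝ, ∑ m ∈ Finset.range n, (n.choose m : ℝ) * v2 * (q ^ (n - m) * (1 - q) ^ m)
      = v2 * (1 - (1 - q) ^ n) := by
    intro q
    have : ∀ m ∈ Finset.range n, (n.choose m : ℝ) * v2 * (q ^ (n - m) * (1 - q) ^ m)
        = ((n.choose m : ℝ) * (1 - q) ^ m * q ^ (n - m)) * v2 := fun m _ => by ring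
    rw [Finset.sum_congr rfl this, ← Finset.sum_mul, binom_sum]; ring
  rw [hS (F v2), hS (F v1)] at hsum
  -- integral splitting
  have hintable : ∀ a b : ℝ, 0 ≤ a → b ≤ 1 → a ∈ Icc (0:ℝ) 1 → b ∈ Icc (0:ℝ) 1 →
      IntervalIntegrable (fun x => (1 - F x) ^ n) MeasureTheory.volume a b := by
    intro a b _ _ ha hb
    apply ContinuousOn.intervalIntegrable
    apply (continuousOn_const.sub (hFc.mono (uIcc_subset_Icc ha hb))).pow
  have hr01 : r ∈ Icc (0:ℝ) 1 := ⟨by linarith, hr1⟩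
  have hsplit : (∫ x in v1..v2, (1 - F x) ^ n) + (∫ x in v2..r, (1 - F x) ^ n)
      = ∫ x in v1..r, (1 - F x) ^ n :=
    intervalIntegral.integral_add_adjacent_intervals
      (hintable v1 v2 h10 hv201.2 hv101 hv201) (hintable v2 r hv201.1 hr1 hv201 hr01)
  -- strict integral bound
  have hIlt : (∫ x in v1..v2, (1 - F x) ^ n) < (v2 - v1) * (1 - F v1) ^ n := by
    have h := intervalIntegral.integral_lt_integral_of_continuousOn_of_le_of_exists_lt
      (f := fun x => (1 - F x) ^ n) (g := fun _ => (1 - F v1) ^ n) h12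
      ((continuousOn_const.sub (hFc.mono (Icc_subset_Icc h10 hv201.2))).pow n)
      continuousOn_const ?hle ?hlt
    · rwa [intervalIntegral.integral_const, smul_eq_mul] at h
    case hle =>
      intro x hx
      have hx01 : x ∈ Icc (0:ℝ) 1 := ⟨h10.trans hx.1.le, hx.2.trans hv201.2⟩
      have h1 : F v1 ≤ F x := hFm hv101 hx01 hx.1.le
      have h2 : F x ≤ 1 := by
        have := hFm hx01 hone hx01.2
        rwa [hF1] at this
      exact pow_le_pow_left₀ (by linarith) (by linarith) n
    case hlt =>
      refine ⟨v2, right_mem_Icc.2 h12.le, ?_⟩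
      have h1 : F v1 < F v2 := hFs hv101 hv201 h12
      exact pow_lt_pow_left₀ (by linarith) (by linarith) hn0
  rw [E1, E2, ← hsplit]
  nlinarith [hsum, hIlt]

lemma integralterm_continuousOn (F : ℝ → ℝ) (n : ℕ) {r : ℝ}
    (hFc : ContinuousOn F (Icc 0 1)) (hFm : MonotoneOn F (Icc 0 1))
    (hF0 : F 0 = 0) (hF1 : F 1 = 1) (hr0 : 0 ≤ r) (hr1 : r ≤ 1) :
    ContinuousOn (fun v => ∫ x in v..r, (1 - F x) ^ n) (Icc 0 r) := by
  have hsub : Icc (0:ℝ) r ⊆ Icc (0:ℝ) 1 := Icc_subset_Icc le_rfl hr1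
  have hintable : ∀ a b : ℝ, a ∈ Icc (0:ℝ) r → b ∈ Icc (0:ℝ) r →
      IntervalIntegrable (fun x => (1 - F x) ^ n) MeasureTheory.volume a b := by
    intro a b ha hb
    apply ContinuousOn.intervalIntegrable
    exact (continuousOn_const.sub (hFc.mono (uIcc_subset_Icc (hsub ha) (hsub hb)))).pow n
  rw [Metric.continuousOn_iff]
  intro v hv ε hε
  refine ⟨ε, hε, fun w hw hdw => ?_⟩
  have hkey : (∫ x in w..r, (1 - F x) ^ n) - (∫ x in v..r, (1 - F x) ^ n)
      = ∫ x in w..v, (1 - F x) ^ n := by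
    have := intervalIntegral.integral_add_adjacent_intervals
      (hintable w v hw hv) (hintable v r hv (right_mem_Icc.2 hr0))
    linarith
  have hbound : |∫ x in w..v, (1 - F x) ^ n| ≤ 1 * |v - w| := by
    rw [← Real.norm_eq_abs]
    apply intervalIntegral.norm_integral_le_of_norm_le_const
    intro x hx
    have hx' : x ∈ Icc (0:ℝ) 1 := by
      rcases le_total w v with h | h
      · rw [uIoc_of_le h] at hx
        exact hsub ⟨hw.1.trans hx.1.le, hx.2.trans hv.2⟩
      · rw [uIoc_of_ge h] at hx
        exact hsub ⟨hv.1.trans hx.1.le, hx.2.trans hw.2⟩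
    have h0 : 0 ≤ F x := by
      have := hFm (left_mem_Icc.2 zero_le_one) hx' hx'.1
      rwa [hF0] at this
    have h1 : F x ≤ 1 := by
      have := hFm hx' (right_mem_Icc.2 zero_le_one) hx'.2
      rwa [hF1] at this
    rw [Real.norm_eq_abs, abs_of_nonneg (pow_nonneg (by linarith) n)]
    exact pow_le_one₀ (by linarith) (by linarith)
  rw [Real.dist_eq, hkey]
  rw [Real.dist_eq] at hdw
  calc |∫ x in w..v, (1 - F x) ^ n| ≤ 1 * |v - w| := hbound
    _ = |w - v| := by rw [one_mul, abs_sub_comm]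
    _ < ε := hdw

lemma phiM_continuousOn (F : ℝ → ℝ) (m : ℕ) {r : ℝ}
    (hFc : ContinuousOn F (Icc 0 1)) (hr0 : 0 ≤ r) (hr1 : r ≤ 1) :
    ContinuousOn (phiM F r m) (Icc 0 r) := by
  have hc : ContinuousOn (fun b => b * (1 - F b) ^ m) (Icc (0:ℝ) 1) :=
    continuousOn_id.mul ((continuousOn_const.sub hFc).pow m)
  have hu := isCompact_Icc.uniformContinuousOn_of_continuous hc
  rw [Metric.uniformContinuousOn_iff] at hu
  rw [Metric.continuousOn_iff]
  intro v hv ε hε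
  obtain ⟨δ, hδ, hδ'⟩ := hu (ε / 2) (by linarith)
  refine ⟨δ, hδ, fun w hw hdw => ?_⟩
  have main : ∀ x y : ℝ, x ∈ Icc 0 r → y ∈ Icc 0 r → x ≤ y → dist x y < δ →
      phiM F r m y ≤ phiM F r m x ∧ phiM F r m x ≤ phiM F r m y + ε / 2 := by
    intro x y hx hy hxy hd
    have hGx := phiM_isGreatest F m hFc hx.1 hx.2 hr1
    have hGy := phiM_isGreatest F m hFc hy.1 hy.2 hr1
    constructor
    · apply csSup_le (by exact ((nonempty_Icc.2 hy.2).image _))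
      rintro _ ⟨b, hb, rfl⟩
      exact hGx.2 ⟨b, Icc_subset_Icc_left hxy hb, rfl⟩
    · obtain ⟨b0, hb0, he⟩ := hGx.1
      rcases le_total y b0 with h | h
      · have h1 : b0 * (1 - F b0) ^ m ≤ phiM F r m y := hGy.2 ⟨b0, ⟨h, hb0.2⟩, rfl⟩
        simp only at he
        rw [← he]; linarith
      · have hb01 : b0 ∈ Icc (0:ℝ) 1 := ⟨hx.1.trans hb0.1, hb0.2.trans hr1⟩
        have hy1 : y ∈ Icc (0:ℝ) 1 := ⟨hy.1, hy.2.trans hr1⟩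
        have hdby : dist b0 y < δ := by
          rw [Real.dist_eq, abs_of_nonpos (by linarith)]
          rw [Real.dist_eq] at hd
          have := hb0.1
          rcases abs_lt.1 hd with ⟨hd1, _⟩
          linarith
        have h2 := hδ' b0 hb01 y hy1 hdby
        have h3 : y * (1 - F y) ^ m ≤ phiM F r m y :=
          hGy.2 ⟨y, left_mem_Icc.2 hy.2, rfl⟩
        simp only at he
        rw [← he]
        rw [Real.dist_eq] at h2
        rcases abs_lt.1 h2 with ⟨_, h2b⟩
        linarith
  rw [Real.dist_eq]
  rcases le_total v w with h | h
  · have := main v w hv hw h (by rwa [dist_comm])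
    rcases abs_lt.1 (by rw [Real.dist_eq] at hdw; rwa [abs_sub_comm] at hdw :
      |v - w| < δ) with _
    rw [abs_lt]; constructor <;> linarith [this.1, this.2]
  · have := main w v hw hv h hdw
    rw [abs_lt]; constructor <;> linarith [this.1, this.2]

theorem pFPA_strictMono_and_unique_cutoff
    (F f : ℝ → ℝ) (N : ℕ) (hN : 2 ≤ N)
    (hderiv : ∀ x ∈ Icc (0 : ℝ) 1, HasDerivAt F (f x) x)
    (hfc : ContinuousOn f (Icc 0 1))
    (hfpos : ∀ x ∈ Ioo (0 : ℝ) 1, 0 < f x)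
    (hF0 : F 0 = 0) (hF1 : F 1 = 1)
    (r : ℝ) (hr : r ∈ Ioc (0 : ℝ) 1) :
    StrictMonoOn (pFPA F N r) (Icc 0 r) ∧
    pFPA F N r 0 = pi0 F N r ∧
    pFPA F N r r = r ∧
    ∀ p ∈ Ioc (pi0 F N r) r, ∃! v, v ∈ Ioc (0 : ℝ) r ∧ pFPA F N r v = p := by
  obtain ⟨hr0, hr1⟩ := hr
  have hFc : ContinuousOn F (Icc 0 1) :=
    fun x hx => (hderiv x hx).continuousAt.continuousWithinAt
  have hFs : StrictMonoOn F (Icc 0 1) := by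
    apply strictMonoOn_of_deriv_pos (convex_Icc 0 1) hFc
    intro x hx
    rw [interior_Icc] at hx
    rw [(hderiv x (Ioo_subset_Icc_self hx)).deriv]
    exact hfpos x hx
  have hFm := hFs.monotoneOn
  -- strict monotonicity
  have hmono : StrictMonoOn (pFPA F N r) (Icc 0 r) := by
    intro a ha b hb hab
    rcases eq_or_lt_of_le hb.2 with hbr | hbr
    · rw [hbr, pFPA_at_r]
      exact pFPA_lt_r F N hN hFc hFs hF0 hF1 ha.1 (hbr ▸ hab) hr1
    · exact pFPA_lt F N hN hFc hFs hF0 hF1 ha.1 hab hbr hr1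
  have h0 : pFPA F N r 0 = pi0 F N r := pFPA_at_zero F N r hF0
  have hR : pFPA F N r r = r := pFPA_at_r F N r
  -- continuity
  have hle_r : ∀ w ∈ Icc (0:ℝ) r, pFPA F N r w ≤ r := by
    intro w hw
    rcases eq_or_lt_of_le hw.2 with h | h
    · rw [h, hR]
    · exact (pFPA_lt_r F N hN hFc hFs hF0 hF1 hw.1 h hr1).le
  have hge_v : ∀ w ∈ Icc (0:ℝ) r, w ≤ pFPA F N r w :=
    fun w hw => le_pFPA F N hFc hFm hF0 hF1 hw.1 hw.2 hr1
  have hcont : ContinuousOn (pFPA F N r) (Icc 0 r) := by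
    intro v hv
    rcases lt_or_eq_of_le (hv.2.trans hr1 : v ≤ 1) with hv1 | hv1
    · -- v < 1 : use the explicit formula on Icc 0 r ∩ Iio 1
      set s : Set ℝ := Icc 0 r ∩ Iio 1 with hs
      have hssub : s ⊆ Icc (0:ℝ) 1 := fun x hx => ⟨hx.1.1, hx.1.2.trans hr1⟩
      have hsFlt : ∀ x ∈ s, F x < 1 := by
        intro x hx
        have := hFs (hssub hx) (right_mem_Icc.2 zero_le_one) hx.2
        rwa [hF1] at this
      have hEc : ContinuousOn (fun v => v * (1 - F v) ^ (N - 1) +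
          (∫ x in v..r, (1 - F x) ^ (N - 1)) +
          ∑ m ∈ Finset.range (N - 1),
            ((N - 1).choose m : ℝ) * (F v) ^ (N - 1 - m) * phiM F r (m + 1) v / (1 - F v)) s := by
        apply ContinuousOn.add
        apply ContinuousOn.add
        · exact continuousOn_id.mul (((continuousOn_const.sub (hFc.mono hssub))).pow _)
        · exact (integralterm_continuousOn F (N - 1) hFc hFm hF0 hF1 hr0.le hr1).mono
            inter_subset_left
        · have : ∀ m ∈ Finset.range (N - 1), ContinuousOn (fun v =>
              ((N - 1).choose m : ℝ) * (F v) ^ (N - 1 - m) * phiM F r (m + 1) v / (1 - F v)) s := by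
            intro m _
            apply ContinuousOn.div
            · exact (continuousOn_const.mul ((hFc.mono hssub).pow _)).mul
                ((phiM_continuousOn F (m + 1) hFc hr0.le hr1).mono inter_subset_left)
            · exact continuousOn_const.sub (hFc.mono hssub)
            · intro x hx
              have := hsFlt x hx
              intro hcontra
              simp only [sub_eq_zero] at hcontra
              linarith
          -- sum of continuous
          revert this
          generalize Finset.range (N - 1) = t
          intro this
          induction t using Finset.induction_on with
          | empty => simpa using continuousOn_const
          | insert _ _ hx ih =>
            simp only [Finset.sum_insert hx]
            exact (this _ (Finset.mem_insert_self _ _)).add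
              (ih fun i hi => this i (Finset.mem_insert_of_mem hi))
      have hvs : v ∈ s := ⟨hv, hv1⟩
      have hcw : ContinuousWithinAt (pFPA F N r) s v := by
        apply (hEc v hvs).congr
        · intro w hw
          exact (pFPA_eq F N hFc hw.1.1 hw.1.2 hr1 (hsFlt w hw)).symm ▸ rfl
        · exact (pFPA_eq F N hFc hv.1 hv.2 hr1 (hsFlt v hvs)).symm ▸ rfl
      exact (continuousWithinAt_inter (Iio_mem_nhds hv1)).1 hcw
    · -- v = 1, hence r = 1 and v = r
      have hvr : v = r := le_antisymm hv.2 (by rw [hv1]; exact hr1)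
      have hpv : pFPA F N r v = v := by rw [hvr, hR]
      rw [ContinuousWithinAt, hpv, hvr]
      apply tendsto_of_tendsto_of_tendsto_of_le_of_le'
        (Filter.tendsto_id.mono_left nhdsWithin_le_nhds) tendsto_const_nhds
      · exact eventually_nhdsWithin_of_forall hge_v
      · exact eventually_nhdsWithin_of_forall hle_r
  refine ⟨hmono, h0, hR, ?_⟩
  intro p hp
  have hmem : p ∈ Icc (pFPA F N r 0) (pFPA F N r r) := by
    rw [h0, hR]; exact ⟨hp.1.le, hp.2⟩
  obtain ⟨v, hv, hpv⟩ := intermediate_value_Icc hr0.le hcont hmem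
  have hv0 : 0 < v := by
    rcases eq_or_lt_of_le hv.1 with h | h
    · exfalso
      rw [← h, h0] at hpv
      exact absurd hpv.symm (ne_of_gt hp.1)
    · exact h
  refine ⟨v, ⟨⟨hv0, hv.2⟩, hpv⟩, ?_⟩
  rintro y ⟨hy, hpy⟩
  exact hmono.injOn ⟨hy.1.le, hy.2⟩ hv (hpy.trans hpv.symm)
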